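/- Let G be a finite simple graph and let α, β be vertices of G such that the transposition exchanging α and β (and fixing all other vertices) is an automorphism of G. Let {G_1, …, G_t} be a factorisation of G such that for each i, either α and β lie in the same connected component of G_i, or at least one of α, β lies on a cycle of G_i. Then there exists a factorisation {F_1, …, F_t} of G such that for each i: (1) F_i has the same number of edges as G_i; (2) every vertex v ∉ {α, β} has the same degree in F_i as in G_i; (3) F_i and G_i have exactly the same edges among vertices other than α and β; (4) |deg_{F_i}(α) − deg_{F_i}(β)| ≤ 1; and (5) α and β lie in the same connected component of F_i. -/

import Mathlib

open SimpleGraph Finset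

section Helpers



variable {X : Type*} [DecidableEq X]

private lemma patch_pairing (S : Finset X) (a b : X) (ha : a ∈ S) (hb : b ∈ S) (hab : a ≠ b)
    (μ : X → X)
    (h1 : ∀ x, x ∉ S \ {a, b} → μ x = x) (h2 : ∀ x ∈ S \ {a, b}, μ x ∈ S \ {a, b})
    (h3 : ∀ x ∈ S \ {a, b}, μ (μ x) = x)
    (h4 : ((S \ {a, b}).filter (fun x => μ x = x)).card ≤ 1) :
    ∃ ν : X → X, (∀ x, x ∉ S → ν x = x) ∧ (∀ x ∈ S, ν x ∈ S) ∧ (∀ x ∈ S, ν (ν x) = x) ∧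
    (S.filter (fun x => ν x = x)).card ≤ 1 ∧ ν a = b := by
  classical
  set ν : X → X := fun x => if x = a then b else if x = b then a else μ x with hν
  have hνa : ν a = b := by simp [hν]
  have hνb : ν b = a := by simp [hν, hab.symm]
  have hother : ∀ x, x ≠ a → x ≠ b → ν x = μ x := by
    intro x hxa hxb; simp [hν, hxa, hxb]
  refine ⟨ν, ?_, ?_, ?_, ?_, hνa⟩
  · intro x hx
    have hxa : x ≠ a := fun h => hx (h ▸ ha)
    have hxb : x ≠ b := fun h => hx (h ▸ hb)
    rw [hother x hxa hxb]
    exact h1 x (fun h => hx (mem_sdiff.mp h).1)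
  · intro x hx
    by_cases hxa : x = a
    · subst hxa; rw [hνa]; exact hb
    by_cases hxb : x = b
    · subst hxb; rw [hνb]; exact ha
    · rw [hother x hxa hxb]
      exact (mem_sdiff.mp (h2 x (by simp [mem_sdiff, hx, hxa, hxb]))).1
  · intro x hx
    by_cases hxa : x = a
    · subst hxa; rw [hνa, hνb]
    by_cases hxb : x = b
    · subst hxb; rw [hνb, hνa]
    · have hx' : x ∈ S \ {a, b} := by simp [mem_sdiff, hx, hxa, hxb]
      have hμx := h2 x hx'
      have hμa : μ x ≠ a := by intro h; have := (mem_sdiff.mp hμx).2; simp [h] at this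
      have hμb : μ x ≠ b := by intro h; have := (mem_sdiff.mp hμx).2; simp [h] at this
      rw [hother x hxa hxb, hother (μ x) hμa hμb]
      exact h3 x hx'
  · have : S.filter (fun x => ν x = x) = (S \ {a, b}).filter (fun x => μ x = x) := by
      ext x
      simp only [mem_filter, mem_sdiff, mem_insert, mem_singleton]
      constructor
      · rintro ⟨hx, hfix⟩
        have hxa : x ≠ a := by rintro rfl; rw [hνa] at hfix; exact hab hfix.symm
        have hxb : x ≠ b := by rintro rfl; rw [hνb] at hfix; exact hab hfix
        rw [hother x hxa hxb] at hfix
        exact ⟨⟨hx, by tauto⟩, hfix⟩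
      · rintro ⟨⟨hx, hne⟩, hfix⟩
        push_neg at hne
        rw [hother x hne.1 hne.2]
        exact ⟨hx, hfix⟩
    rw [this]; exact h4

private lemma exists_pairing (S : Finset X) : ∃ μ : X → X,
    (∀ x, x ∉ S → μ x = x) ∧ (∀ x ∈ S, μ x ∈ S) ∧ (∀ x ∈ S, μ (μ x) = x) ∧
    (S.filter (fun x => μ x = x)).card ≤ 1 := by
  classical
  induction S using Finset.strongInduction with
  | _ S ih =>
    by_cases h1 : S.card ≤ 1
    · exact ⟨id, fun x _ => rfl, fun x hx => hx, fun x _ => rfl,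
        le_trans (card_le_card (filter_subset _ _)) h1⟩
    · push_neg at h1
      obtain ⟨a, ha, b, hb, hab⟩ := Finset.one_lt_card.mp h1
      have hss : S \ {a, b} ⊂ S := by
        refine Finset.sdiff_ssubset ?_ (by simp)
        intro x hx
        simp only [mem_insert, mem_singleton] at hx
        rcases hx with rfl | rfl
        · exact ha
        · exact hb
      obtain ⟨μ, hout, hmaps, hinv, hfix⟩ := ih _ hss
      obtain ⟨ν, p1, p2, p3, p4, _⟩ := patch_pairing S a b ha hb hab μ hout hmaps hinv hfix
      exact ⟨ν, p1, p2, p3, p4⟩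

private lemma exists_pairing_pair (S : Finset X) (a b : X) (ha : a ∈ S) (hb : b ∈ S)
    (hab : a ≠ b) :
    ∃ μ : X → X, (∀ x, x ∉ S → μ x = x) ∧ (∀ x ∈ S, μ x ∈ S) ∧ (∀ x ∈ S, μ (μ x) = x) ∧
    (S.filter (fun x => μ x = x)).card ≤ 1 ∧ μ a = b := by
  obtain ⟨μ, hout, hmaps, hinv, hfix⟩ := exists_pairing (S \ {a, b})
  exact patch_pairing S a b ha hb hab μ hout hmaps hinv hfix




variable {X : Type*} [DecidableEq X]

private lemma exists_coloring_aux (n : ℕ) : ∀ (s : Finset X), s.card ≤ n → ∀ (τ μ : X → X),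
    (∀ x ∈ s, τ x ∈ s) → (∀ x ∈ s, τ (τ x) = x) → (∀ x ∈ s, τ x ≠ x) →
    (∀ x ∈ s, μ x ∈ s) → (∀ x ∈ s, μ (μ x) = x) →
    ∃ f : X → Bool, (∀ x ∈ s, f (τ x) = ! f x) ∧ (∀ x ∈ s, μ x ≠ x → f (μ x) = ! f x) := by
  induction n with
  | zero =>
    intro s hs τ μ _ _ _ _ _
    have : s = ∅ := Finset.card_eq_zero.mp (Nat.le_zero.mp hs)
    subst this
    exact ⟨fun _ => true, by simp, by simp⟩
  | succ n ih =>
    intro s hcard τ μ hτs hττ hτne hμs hμμ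
    rcases s.eq_empty_or_nonempty with rfl | ⟨x₀, hx₀⟩
    · exact ⟨fun _ => true, by simp, by simp⟩
    have hμback : ∀ x ∈ s, ∀ z, μ x = z → μ z = x := by
      intro x hx z h; rw [← h]; exact hμμ x hx
    have hτback : ∀ x ∈ s, ∀ z, τ x = z → τ z = x := by
      intro x hx z h; rw [← h]; exact hττ x hx
    set x₁ := τ x₀ with hx₁def
    have hx₁ : x₁ ∈ s := hτs x₀ hx₀
    have hne01 : x₁ ≠ x₀ := hτne x₀ hx₀
    have hτ10 : τ x₁ = x₀ := hττ x₀ hx₀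
    set s' : Finset X := s \ {x₀, x₁} with hs'
    have hmem' : ∀ x, x ∈ s' ↔ x ∈ s ∧ x ≠ x₀ ∧ x ≠ x₁ := by
      intro x
      rw [hs', mem_sdiff, mem_insert, mem_singleton]
      tauto
    have hcard' : s'.card ≤ n := by
      have h1 : s'.card < s.card := by
        apply Finset.card_lt_card
        constructor
        · exact Finset.sdiff_subset
        · intro hsub
          have := hsub hx₀
          rw [hmem'] at this
          exact this.2.1 rfl
      omega
    have hτs' : ∀ x ∈ s', τ x ∈ s' := by
      intro x hx
      rw [hmem'] at hx ⊢
      refine ⟨hτs x hx.1, ?_, ?_⟩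
      · intro h
        have := hτback x hx.1 x₀ h
        exact hx.2.2 (by rw [← this, hx₁def])
      · intro h
        have := hτback x hx.1 x₁ h
        exact hx.2.1 (by rw [← this, hτ10])
    have hττ' : ∀ x ∈ s', τ (τ x) = x := fun x hx => hττ x ((hmem' x).mp hx).1
    have hτne' : ∀ x ∈ s', τ x ≠ x := fun x hx => hτne x ((hmem' x).mp hx).1
    have hfval : ∀ (f' : X → Bool) (v₀ v₁ : Bool) (x : X), x ≠ x₀ → x ≠ x₁ →
        (fun z => if z = x₀ then v₀ else if z = x₁ then v₁ else f' z) x = f' x := by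
      intro f' v₀ v₁ x h0 h1
      simp only [if_neg h0, if_neg h1]
    have hτpart : ∀ (f' : X → Bool) (v₀ v₁ : Bool), v₁ = !v₀ →
        (∀ x ∈ s', f' (τ x) = !f' x) →
        (∀ x ∈ s, (fun z => if z = x₀ then v₀ else if z = x₁ then v₁ else f' z) (τ x) =
          ! (fun z => if z = x₀ then v₀ else if z = x₁ then v₁ else f' z) x) := by
      intro f' v₀ v₁ hv hf'τ x hx
      by_cases h0 : x = x₀
      · subst h0
        rw [← hx₁def]
        simp [hne01, hv]
      by_cases h1 : x = x₁
      · subst h1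
        rw [hτ10]
        simp [hne01, hv]
      · have hx' : x ∈ s' := (hmem' x).mpr ⟨hx, h0, h1⟩
        have hτx' := (hmem' _).mp (hτs' x hx')
        rw [hfval f' v₀ v₁ _ hτx'.2.1 hτx'.2.2, hfval f' v₀ v₁ x h0 h1]
        exact hf'τ x hx'
    -- case C0 : μ x₀ = x₁
    by_cases hC0 : μ x₀ = x₁
    · have hμ10 : μ x₁ = x₀ := hμback x₀ hx₀ x₁ hC0
      have hμs' : ∀ x ∈ s', μ x ∈ s' := by
        intro x hx
        rw [hmem'] at hx ⊢
        refine ⟨hμs x hx.1, ?_, ?_⟩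
        · intro h
          have := hμback x hx.1 x₀ h
          exact hx.2.2 (by rw [← this, hC0])
        · intro h
          have := hμback x hx.1 x₁ h
          exact hx.2.1 (by rw [← this, hμ10])
      have hμμ' : ∀ x ∈ s', μ (μ x) = x := fun x hx => hμμ x ((hmem' x).mp hx).1
      obtain ⟨f', hf'τ, hf'μ⟩ := ih s' hcard' τ μ hτs' hττ' hτne' hμs' hμμ'
      refine ⟨fun z => if z = x₀ then true else if z = x₁ then false else f' z,
        hτpart f' true false rfl hf'τ, ?_⟩
      intro x hx hmv
      by_cases h0 : x = x₀
      · subst h0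
        rw [hC0]
        simp [hne01]
      by_cases h1 : x = x₁
      · subst h1
        rw [hμ10]
        simp [hne01]
      · have hx' : x ∈ s' := (hmem' x).mpr ⟨hx, h0, h1⟩
        have hμx' := (hmem' _).mp (hμs' x hx')
        rw [hfval f' true false _ hμx'.2.1 hμx'.2.2, hfval f' true false x h0 h1]
        exact hf'μ x hx' hmv
    · have hμ1ne0 : μ x₁ ≠ x₀ := fun h => hC0 (hμback x₁ hx₁ x₀ h)
      by_cases hf0 : μ x₀ = x₀ <;> by_cases hf1 : μ x₁ = x₁
      -- C1 : both fixed
      · have hμs' : ∀ x ∈ s', μ x ∈ s' := by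
          intro x hx
          rw [hmem'] at hx ⊢
          refine ⟨hμs x hx.1, ?_, ?_⟩
          · intro h
            have := hμback x hx.1 x₀ h
            exact hx.2.1 (by rw [← this, hf0])
          · intro h
            have := hμback x hx.1 x₁ h
            exact hx.2.2 (by rw [← this, hf1])
        have hμμ' : ∀ x ∈ s', μ (μ x) = x := fun x hx => hμμ x ((hmem' x).mp hx).1
        obtain ⟨f', hf'τ, hf'μ⟩ := ih s' hcard' τ μ hτs' hττ' hτne' hμs' hμμ'
        refine ⟨fun z => if z = x₀ then true else if z = x₁ then false else f' z,
          hτpart f' true false rfl hf'τ, ?_⟩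
        intro x hx hmv
        by_cases h0 : x = x₀
        · exact absurd (h0 ▸ hf0) (h0 ▸ hmv)
        by_cases h1 : x = x₁
        · exact absurd (h1 ▸ hf1) (h1 ▸ hmv)
        · have hx' : x ∈ s' := (hmem' x).mpr ⟨hx, h0, h1⟩
          have hμx' := (hmem' _).mp (hμs' x hx')
          rw [hfval f' true false _ hμx'.2.1 hμx'.2.2, hfval f' true false x h0 h1]
          exact hf'μ x hx' hmv
      -- C2 : μ x₀ = x₀, y := μ x₁ ≠ x₁
      · set y := μ x₁ with hydef
        have hy : y ∈ s := hμs x₁ hx₁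
        have hμy : μ y = x₁ := hμμ x₁ hx₁
        have hyne0 : y ≠ x₀ := hμ1ne0
        have hyne1 : y ≠ x₁ := hf1
        have hy' : y ∈ s' := (hmem' y).mpr ⟨hy, hyne0, hyne1⟩
        set ν : X → X := fun z => if z = y then y else μ z with hν
        have hνy : ν y = y := by simp only [hν, if_pos rfl]
        have hνo : ∀ z, z ≠ y → ν z = μ z := by intro z hz; simp only [hν, if_neg hz]
        have hνs' : ∀ x ∈ s', ν x ∈ s' := by
          intro x hx
          by_cases hxy : x = y
          · subst hxy; rw [hνy]; exact hx
          rw [hνo x hxy]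
          rw [hmem'] at hx ⊢
          refine ⟨hμs x hx.1, ?_, ?_⟩
          · intro h
            have := hμback x hx.1 x₀ h
            exact hx.2.1 (by rw [← this, hf0])
          · intro h
            have := hμback x hx.1 x₁ h
            exact hxy (by rw [← this, ← hydef])
        have hνν' : ∀ x ∈ s', ν (ν x) = x := by
          intro x hx
          by_cases hxy : x = y
          · subst hxy; rw [hνy, hνy]
          rw [hνo x hxy]
          have hμxy : μ x ≠ y := by
            intro h
            have := hμback x ((hmem' x).mp hx).1 y h
            rw [hμy] at this
            exact ((hmem' x).mp hx).2.2 this.symm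
          rw [hνo _ hμxy]
          exact hμμ x ((hmem' x).mp hx).1
        obtain ⟨f', hf'τ, hf'μ⟩ := ih s' hcard' τ ν hτs' hττ' hτne' hνs' hνν'
        refine ⟨fun z => if z = x₀ then f' y else if z = x₁ then !(f' y) else f' z,
          hτpart f' (f' y) (!(f' y)) rfl hf'τ, ?_⟩
        intro x hx hmv
        by_cases h0 : x = x₀
        · exact absurd (h0 ▸ hf0) (h0 ▸ hmv)
        by_cases h1 : x = x₁
        · subst h1
          rw [← hydef, hfval f' _ _ y hyne0 hyne1]
          simp [h0]
        by_cases hxy : x = y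
        · rw [hxy, hμy, hfval f' _ _ y hyne0 hyne1]
          simp [hne01]
        · have hx' : x ∈ s' := (hmem' x).mpr ⟨hx, h0, h1⟩
          have hνmv : ν x ≠ x := by rw [hνo x hxy]; exact hmv
          have hμx' := hνs' x hx'
          rw [hνo x hxy] at hμx'
          rw [hmem'] at hμx'
          rw [hfval f' _ _ _ hμx'.2.1 hμx'.2.2, hfval f' _ _ x h0 h1]
          have := hf'μ x hx' hνmv
          rw [hνo x hxy] at this
          exact this
      -- C2' : μ x₁ = x₁, y := μ x₀ ≠ x₀
      · set y := μ x₀ with hydef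
        have hy : y ∈ s := hμs x₀ hx₀
        have hμy : μ y = x₀ := hμμ x₀ hx₀
        have hyne0 : y ≠ x₀ := hf0
        have hyne1 : y ≠ x₁ := hC0
        have hy' : y ∈ s' := (hmem' y).mpr ⟨hy, hyne0, hyne1⟩
        set ν : X → X := fun z => if z = y then y else μ z with hν
        have hνy : ν y = y := by simp only [hν, if_pos rfl]
        have hνo : ∀ z, z ≠ y → ν z = μ z := by intro z hz; simp only [hν, if_neg hz]
        have hνs' : ∀ x ∈ s', ν x ∈ s' := by
          intro x hx
          by_cases hxy : x = y
          · subst hxy; rw [hνy]; exact hx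
          rw [hνo x hxy]
          rw [hmem'] at hx ⊢
          refine ⟨hμs x hx.1, ?_, ?_⟩
          · intro h
            have := hμback x hx.1 x₀ h
            exact hxy (by rw [← this, ← hydef])
          · intro h
            have := hμback x hx.1 x₁ h
            exact hx.2.2 (by rw [← this, hf1])
        have hνν' : ∀ x ∈ s', ν (ν x) = x := by
          intro x hx
          by_cases hxy : x = y
          · subst hxy; rw [hνy, hνy]
          rw [hνo x hxy]
          have hμxy : μ x ≠ y := by
            intro h
            have := hμback x ((hmem' x).mp hx).1 y h
            rw [hμy] at this
            exact ((hmem' x).mp hx).2.1 this.symm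
          rw [hνo _ hμxy]
          exact hμμ x ((hmem' x).mp hx).1
        obtain ⟨f', hf'τ, hf'μ⟩ := ih s' hcard' τ ν hτs' hττ' hτne' hνs' hνν'
        refine ⟨fun z => if z = x₀ then !(f' y) else if z = x₁ then f' y else f' z,
          hτpart f' (!(f' y)) (f' y) (Bool.not_not _).symm hf'τ, ?_⟩
        intro x hx hmv
        by_cases h1 : x = x₁
        · exact absurd (h1 ▸ hf1) (h1 ▸ hmv)
        by_cases h0 : x = x₀
        · subst h0
          rw [← hydef, hfval f' _ _ y hyne0 hyne1]
          simp
        by_cases hxy : x = y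
        · rw [hxy, hμy, hfval f' _ _ y hyne0 hyne1]
          simp
        · have hx' : x ∈ s' := (hmem' x).mpr ⟨hx, h0, h1⟩
          have hνmv : ν x ≠ x := by rw [hνo x hxy]; exact hmv
          have hμx' := hνs' x hx'
          rw [hνo x hxy] at hμx'
          rw [hmem'] at hμx'
          rw [hfval f' _ _ _ hμx'.2.1 hμx'.2.2, hfval f' _ _ x h0 h1]
          have := hf'μ x hx' hνmv
          rw [hνo x hxy] at this
          exact this
      -- C3 : both moved, μ x₀ ≠ x₁
      · set y₀ := μ x₀ with hy₀def
        set y₁ := μ x₁ with hy₁def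
        have hy₀ : y₀ ∈ s := hμs x₀ hx₀
        have hy₁ : y₁ ∈ s := hμs x₁ hx₁
        have hμy₀ : μ y₀ = x₀ := hμμ x₀ hx₀
        have hμy₁ : μ y₁ = x₁ := hμμ x₁ hx₁
        have hy₀ne0 : y₀ ≠ x₀ := hf0
        have hy₀ne1 : y₀ ≠ x₁ := hC0
        have hy₁ne1 : y₁ ≠ x₁ := hf1
        have hy₁ne0 : y₁ ≠ x₀ := hμ1ne0
        have hy01 : y₀ ≠ y₁ := by
          intro h
          apply hne01
          rw [← hμy₁, ← h, hμy₀]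
        have hy₀' : y₀ ∈ s' := (hmem' y₀).mpr ⟨hy₀, hy₀ne0, hy₀ne1⟩
        have hy₁' : y₁ ∈ s' := (hmem' y₁).mpr ⟨hy₁, hy₁ne0, hy₁ne1⟩
        set ν : X → X := fun z => if z = y₀ then y₁ else if z = y₁ then y₀ else μ z with hν
        have hνy₀ : ν y₀ = y₁ := by simp [hν]
        have hνy₁ : ν y₁ = y₀ := by simp [hν, hy01.symm]
        have hνo : ∀ z, z ≠ y₀ → z ≠ y₁ → ν z = μ z := by
          intro z h1 h2; simp only [hν, if_neg h1, if_neg h2]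
        have hνs' : ∀ x ∈ s', ν x ∈ s' := by
          intro x hx
          by_cases hx0 : x = y₀
          · subst hx0; rw [hνy₀]; exact hy₁'
          by_cases hx1 : x = y₁
          · subst hx1; rw [hνy₁]; exact hy₀'
          rw [hνo x hx0 hx1]
          rw [hmem'] at hx ⊢
          refine ⟨hμs x hx.1, ?_, ?_⟩
          · intro h
            have := hμback x hx.1 x₀ h
            exact hx0 (by rw [← this, ← hy₀def])
          · intro h
            have := hμback x hx.1 x₁ h
            exact hx1 (by rw [← this, ← hy₁def])
        have hνν' : ∀ x ∈ s', ν (ν x) = x := by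
          intro x hx
          by_cases hx0 : x = y₀
          · subst hx0; rw [hνy₀, hνy₁]
          by_cases hx1 : x = y₁
          · subst hx1; rw [hνy₁, hνy₀]
          rw [hνo x hx0 hx1]
          have h1 : μ x ≠ y₀ := by
            intro h
            have := hμback x ((hmem' x).mp hx).1 y₀ h
            rw [hμy₀] at this
            exact ((hmem' x).mp hx).2.1 this.symm
          have h2 : μ x ≠ y₁ := by
            intro h
            have := hμback x ((hmem' x).mp hx).1 y₁ h
            rw [hμy₁] at this
            exact ((hmem' x).mp hx).2.2 this.symm
          rw [hνo _ h1 h2]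
          exact hμμ x ((hmem' x).mp hx).1
        obtain ⟨f', hf'τ, hf'μ⟩ := ih s' hcard' τ ν hτs' hττ' hτne' hνs' hνν'
        have hkey : f' y₁ = !(f' y₀) := by
          have := hf'μ y₀ hy₀' (by rw [hνy₀]; exact hy01.symm)
          rw [hνy₀] at this
          exact this
        refine ⟨fun z => if z = x₀ then !(f' y₀) else if z = x₁ then !(f' y₁) else f' z,
          hτpart f' (!(f' y₀)) (!(f' y₁)) (by rw [hkey, Bool.not_not]) hf'τ, ?_⟩
        intro x hx hmv
        by_cases h0 : x = x₀
        · subst h0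
          rw [← hy₀def, hfval f' _ _ y₀ hy₀ne0 hy₀ne1]
          simp
        by_cases h1 : x = x₁
        · subst h1
          rw [← hy₁def, hfval f' _ _ y₁ hy₁ne0 hy₁ne1]
          simp [hne01]
        by_cases hxy0 : x = y₀
        · rw [hxy0, hμy₀, hfval f' _ _ y₀ hy₀ne0 hy₀ne1]
          simp
        by_cases hxy1 : x = y₁
        · rw [hxy1, hμy₁, hfval f' _ _ y₁ hy₁ne0 hy₁ne1]
          simp [hne01]
        · have hx' : x ∈ s' := (hmem' x).mpr ⟨hx, h0, h1⟩
          have hνmv : ν x ≠ x := by rw [hνo x hxy0 hxy1]; exact hmv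
          have hμx' := hνs' x hx'
          rw [hνo x hxy0 hxy1] at hμx'
          rw [hmem'] at hμx'
          rw [hfval f' _ _ _ hμx'.2.1 hμx'.2.2, hfval f' _ _ x h0 h1]
          have := hf'μ x hx' hνmv
          rw [hνo x hxy0 hxy1] at this
          exact this

private lemma exists_coloring (s : Finset X) (τ μ : X → X)
    (hτs : ∀ x ∈ s, τ x ∈ s) (hττ : ∀ x ∈ s, τ (τ x) = x) (hτne : ∀ x ∈ s, τ x ≠ x)
    (hμs : ∀ x ∈ s, μ x ∈ s) (hμμ : ∀ x ∈ s, μ (μ x) = x) :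
    ∃ f : X → Bool, (∀ x ∈ s, f (τ x) = ! f x) ∧ (∀ x ∈ s, μ x ≠ x → f (μ x) = ! f x) :=
  exists_coloring_aux s.card s le_rfl τ μ hτs hττ hτne hμs hμμ


variable {X : Type*} [DecidableEq X]

private lemma balance_count (S : Finset X) (μ : X → X) (f : X → Bool)
    (hs : ∀ x ∈ S, μ x ∈ S) (hi : ∀ x ∈ S, μ (μ x) = x)
    (hf : ∀ x ∈ S, μ x ≠ x → f (μ x) = ! f x)
    (hfix : (S.filter fun x => μ x = x).card ≤ 1) :
    |((S.filter fun x => f x = true).card : ℤ) - ((S.filter fun x => f x = false).card : ℤ)| ≤ 1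
    := by
  classical
  have hbij : ((S.filter fun x => f x = true ∧ μ x ≠ x).card)
      = ((S.filter fun x => f x = false ∧ μ x ≠ x).card) := by
    apply Finset.card_bij (fun x _ => μ x)
    · intro a ha
      rw [mem_filter] at ha ⊢
      obtain ⟨haS, hat, hamv⟩ := ha
      refine ⟨hs a haS, ?_, ?_⟩
      · rw [hf a haS hamv, hat]; rfl
      · intro h
        apply hamv
        have := hi a haS
        rw [h] at this
        exact this
    · intro a ha b hb h
      rw [mem_filter] at ha hb
      rw [← hi a ha.1, h, hi b hb.1]
    · intro b hb
      rw [mem_filter] at hb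
      obtain ⟨hbS, hbf, hbmv⟩ := hb
      have hmb : μ b ≠ b := hbmv
      have hμbS := hs b hbS
      refine ⟨μ b, ?_, hi b hbS⟩
      rw [mem_filter]
      refine ⟨hμbS, ?_, ?_⟩
      · rw [hf b hbS hmb, hbf]; rfl
      · intro h
        rw [hi b hbS] at h
        exact hmb h.symm
  have hsplit : ∀ (b : Bool), (S.filter fun x => f x = b).card
      = (S.filter fun x => f x = b ∧ μ x ≠ x).card + (S.filter fun x => f x = b ∧ μ x = x).card
      := by
    intro b
    rw [← Finset.card_union_of_disjoint, Finset.filter_union_right]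
    · congr 1
      apply Finset.filter_congr
      intro x _
      tauto
    · rw [Finset.disjoint_filter]
      intro x _ h1 h2
      exact h1.2 h2.2
  have hfix2 : (S.filter fun x => f x = true ∧ μ x = x).card
      + (S.filter fun x => f x = false ∧ μ x = x).card ≤ 1 := by
    have h1 : (S.filter fun x => f x = true ∧ μ x = x) ∪
        (S.filter fun x => f x = false ∧ μ x = x) ⊆ (S.filter fun x => μ x = x) := by
      intro x hx
      rw [Finset.mem_union, mem_filter, mem_filter] at hx
      rw [mem_filter]
      tauto
    have h2 : Disjoint (S.filter fun x => f x = true ∧ μ x = x)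
        (S.filter fun x => f x = false ∧ μ x = x) := by
      rw [Finset.disjoint_filter]
      intro x _ h1 h2
      rw [h1.1] at h2
      exact absurd h2.1 (by simp)
    calc _ = ((S.filter fun x => f x = true ∧ μ x = x) ∪
        (S.filter fun x => f x = false ∧ μ x = x)).card := (Finset.card_union_of_disjoint h2).symm
      _ ≤ (S.filter fun x => μ x = x).card := Finset.card_le_card h1
      _ ≤ 1 := hfix
  rw [hsplit true, hsplit false]
  push_cast
  rw [hbij]
  have := hfix2
  rw [abs_le]
  omega

private lemma walk_decomp {V : Type*} {H : SimpleGraph V} {a b : V} (q : H.Walk a b)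
    (hne : a ≠ b) :
    ∃ (w : V) (hadj : H.Adj a w) (r : H.Walk w b), q = SimpleGraph.Walk.cons hadj r := by
  cases q with
  | nil => exact absurd rfl hne
  | cons h r => exact ⟨_, h, r, rfl⟩

private lemma walk_decomp' {V : Type*} {H : SimpleGraph V} {a : V} (q : H.Walk a a)
    (hne : q ≠ SimpleGraph.Walk.nil) :
    ∃ (w : V) (hadj : H.Adj a w) (r : H.Walk w a), q = SimpleGraph.Walk.cons hadj r := by
  cases q with
  | nil => exact absurd rfl hne
  | cons h r => exact ⟨_, h, r, rfl⟩

end Helpers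

theorem connecting_lemma
    {V : Type*} [Fintype V] [DecidableEq V] (G : SimpleGraph V) (α β : V)
    (hswap : ∀ u v, G.Adj u v ↔ G.Adj (Equiv.swap α β u) (Equiv.swap α β v))
    (t : ℕ) (Gi : Fin t → SimpleGraph V)
    (hle : ∀ i, Gi i ≤ G)
    (hpart : ∀ e ∈ G.edgeSet, ∃! i, e ∈ (Gi i).edgeSet)
    (hcomp : ∀ i, (Gi i).Reachable α β ∨
      (∃ c : (Gi i).Walk α α, c.IsCycle) ∨ (∃ c : (Gi i).Walk β β, c.IsCycle)) :
    ∃ F : Fin t → SimpleGraph V,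
      (∀ i, F i ≤ G) ∧
      (∀ e ∈ G.edgeSet, ∃! i, e ∈ (F i).edgeSet) ∧
      -- (1) same number of edges
      (∀ i, (F i).edgeSet.ncard = (Gi i).edgeSet.ncard) ∧
      -- (2) vertices other than α, β keep their degrees
      (∀ i, ∀ v, v ≠ α → v ≠ β →
        ((F i).neighborSet v).ncard = ((Gi i).neighborSet v).ncard) ∧
      -- (3) same edges among vertices other than α and β
      (∀ i, ∀ u v, u ≠ α → u ≠ β → v ≠ α → v ≠ β → ((F i).Adj u v ↔ (Gi i).Adj u v)) ∧
      -- (4) almost regular on {α, β}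
      (∀ i, |(((F i).neighborSet α).ncard : ℤ) - (((F i).neighborSet β).ncard : ℤ)| ≤ 1) ∧
      -- (5) α and β in the same component of F i
      (∀ i, (F i).Reachable α β) := by
  classical
  by_cases hab : α = β
  · subst hab
    exact ⟨Gi, hle, hpart, fun i => rfl, fun i v _ _ => rfl, fun i u v _ _ _ _ => Iff.rfl,
      fun i => by simp, fun i => Reachable.refl α⟩
  rcases Nat.eq_zero_or_pos t with ht | ht
  · subst ht
    exact ⟨Gi, hle, hpart, fun i => i.elim0, fun i => i.elim0, fun i => i.elim0,
      fun i => i.elim0, fun i => i.elim0⟩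
  -- main case
  have hβα : β ≠ α := Ne.symm hab
  set i₀ : Fin t := ⟨0, ht⟩ with hi₀
  set c : Sym2 V → Fin t :=
    fun e => if h : e ∈ G.edgeSet then (hpart e h).choose else i₀ with hcdef
  have hc : ∀ (i : Fin t) (u v : V), (Gi i).Adj u v ↔ (G.Adj u v ∧ c s(u, v) = i) := by
    intro i u v
    constructor
    · intro h
      have hG : G.Adj u v := hle i h
      have hGe : s(u, v) ∈ G.edgeSet := hG
      refine ⟨hG, ?_⟩
      rw [hcdef]
      simp only [dif_pos hGe]
      exact ((hpart _ hGe).choose_spec.2 i h).symm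
    · rintro ⟨hG, hci⟩
      have hGe : s(u, v) ∈ G.edgeSet := hG
      rw [hcdef] at hci
      simp only [dif_pos hGe] at hci
      have h2 := (hpart _ hGe).choose_spec.1
      simp only [SimpleGraph.mem_edgeSet] at h2
      subst hci
      exact h2
  -- swap facts
  have hswo : ∀ v, v ≠ α → v ≠ β → (G.Adj α v ↔ G.Adj β v) := by
    intro v h1 h2
    have := hswap α v
    rwa [Equiv.swap_apply_left, Equiv.swap_apply_of_ne_of_ne h1 h2] at this
  -- the common neighbourhood
  set N : Finset V := univ.filter (fun v => v ≠ α ∧ v ≠ β ∧ G.Adj α v) with hNdef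
  have hNmem : ∀ v, v ∈ N ↔ (v ≠ α ∧ v ≠ β ∧ G.Adj α v) := by
    intro v; rw [hNdef, mem_filter]; simp
  have hNβ : ∀ v ∈ N, G.Adj β v := by
    intro v hv
    rw [hNmem] at hv
    exact (hswo v hv.1 hv.2.1).mp hv.2.2
  -- endpoints
  set vtx : V × Bool → Fin t := fun e => if e.2 then c s(β, e.1) else c s(α, e.1) with hvtxdef
  set SN : Finset (V × Bool) := N ×ˢ univ with hSNdef
  have hSNmem : ∀ e : V × Bool, e ∈ SN ↔ e.1 ∈ N := by
    intro e; rw [hSNdef, mem_product]; simp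
  set Ei : Fin t → Finset (V × Bool) := fun i => SN.filter (fun e => vtx e = i) with hEidef
  have hEimem : ∀ i e, e ∈ Ei i ↔ (e.1 ∈ N ∧ vtx e = i) := by
    intro i e; rw [hEidef, mem_filter, hSNmem]
  have hvtx_f : ∀ v, vtx (v, false) = c s(α, v) := by intro v; simp [hvtxdef]
  have hvtx_t : ∀ v, vtx (v, true) = c s(β, v) := by intro v; simp [hvtxdef]
  -- the extraction from hcomp
  have hTR : ∀ i : Fin t,
      ((G.Adj α β ∧ c s(α, β) = i) ∨ (∃ v ∈ N, c s(α, v) = i ∧ c s(β, v) = i)) ∨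
      (∃ v w : V, v ∈ N ∧ w ∈ N ∧ v ≠ w ∧ ∃ bv bw : Bool,
        vtx (v, bv) = i ∧ vtx (w, bw) = i ∧
        ∃ p : (Gi i).Walk v w, ∀ x ∈ p.support, x ≠ α ∧ x ≠ β) := by
    intro i
    have main1 : (Gi i).Reachable α β →
        (((G.Adj α β ∧ c s(α, β) = i) ∨ (∃ v ∈ N, c s(α, v) = i ∧ c s(β, v) = i)) ∨
        (∃ v w : V, v ∈ N ∧ w ∈ N ∧ v ≠ w ∧ ∃ bv bw : Bool,
          vtx (v, bv) = i ∧ vtx (w, bw) = i ∧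
          ∃ p : (Gi i).Walk v w, ∀ x ∈ p.support, x ≠ α ∧ x ≠ β)) := by
      intro hreach
      by_cases hadjB : (Gi i).Adj α β
      · exact Or.inl (Or.inl ⟨hle i hadjB, ((hc i α β).mp hadjB).2⟩)
      obtain ⟨p0⟩ := hreach
      obtain ⟨p, hp⟩ := p0.toPath
      obtain ⟨v, hadj, q, hdec⟩ := walk_decomp p hab
      rw [hdec, SimpleGraph.Walk.cons_isPath_iff] at hp
      obtain ⟨hq, hαq⟩ := hp
      have hvβ : v ≠ β := fun h => hadjB (h ▸ hadj)
      have hvα : v ≠ α := fun h => (Gi i).irrefl (h ▸ hadj)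
      obtain ⟨w, hadj2, r, hrev⟩ := walk_decomp q.reverse (Ne.symm hvβ)
      have hqp := hq.reverse
      rw [hrev, SimpleGraph.Walk.cons_isPath_iff] at hqp
      obtain ⟨hr, hβr⟩ := hqp
      have hrsub : ∀ x, x ∈ r.support → x ∈ q.support := by
        intro x hx
        have h1 : x ∈ q.reverse.support := by
          rw [hrev, SimpleGraph.Walk.support_cons]
          exact List.mem_cons_of_mem _ hx
        rwa [SimpleGraph.Walk.support_reverse, List.mem_reverse] at h1
      have hwα : w ≠ α := fun h => hαq (hrsub α (h ▸ r.start_mem_support))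
      have hwβ : w ≠ β := fun h => (Gi i).irrefl (h ▸ hadj2)
      have hvN : v ∈ N := (hNmem v).mpr ⟨hvα, hvβ, hle i hadj⟩
      have hwN : w ∈ N := (hNmem w).mpr ⟨hwα, hwβ, (hswo w hwα hwβ).mpr (hle i hadj2)⟩
      have hclsv : c s(α, v) = i := ((hc i α v).mp hadj).2
      have hclsw : c s(β, w) = i := ((hc i β w).mp hadj2).2
      by_cases hvw : v = w
      · exact Or.inl (Or.inr ⟨v, hvN, hclsv, by rw [hvw]; exact hclsw⟩)
      · refine Or.inr ⟨v, w, hvN, hwN, hvw, false, true, ?_, ?_, r.reverse, ?_⟩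
        · rw [hvtx_f]; exact hclsv
        · rw [hvtx_t]; exact hclsw
        · intro x hx
          rw [SimpleGraph.Walk.support_reverse, List.mem_reverse] at hx
          refine ⟨fun h => hαq ?_, fun h => hβr ?_⟩
          · rw [← h]; exact hrsub x hx
          · rw [← h]; exact hx
    by_cases hreach : (Gi i).Reachable α β
    · exact main1 hreach
    rcases hcomp i with h | hcyc | hcyc
    · exact main1 h
    · -- cycle through α
      obtain ⟨cyc, hcy0⟩ := hcyc
      have hβsup : β ∉ cyc.support := fun h => hreach ⟨cyc.takeUntil β h⟩
      obtain ⟨v, hadj, q, hdec⟩ := walk_decomp' cyc hcy0.ne_nil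
      have hcy := hcy0
      rw [hdec, SimpleGraph.Walk.cons_isCycle_iff] at hcy
      obtain ⟨hq, hedge⟩ := hcy
      have hvα : v ≠ α := fun h => (Gi i).irrefl (h ▸ hadj)
      obtain ⟨w, hadj2, r, hrev⟩ := walk_decomp q.reverse (Ne.symm hvα)
      have hqp := hq.reverse
      rw [hrev, SimpleGraph.Walk.cons_isPath_iff] at hqp
      obtain ⟨hr, hαr⟩ := hqp
      have hrsub : ∀ x, x ∈ r.support → x ∈ q.support := by
        intro x hx
        have h1 : x ∈ q.reverse.support := by
          rw [hrev, SimpleGraph.Walk.support_cons]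
          exact List.mem_cons_of_mem _ hx
        rwa [SimpleGraph.Walk.support_reverse, List.mem_reverse] at h1
      have hqsub : ∀ x, x ∈ q.support → x ∈ cyc.support := by
        intro x hx
        rw [hdec, SimpleGraph.Walk.support_cons]
        exact List.mem_cons_of_mem _ hx
      have hvβ : v ≠ β := fun h => hβsup (by rw [← h]; exact hqsub v q.start_mem_support)
      have hwβ : w ≠ β := fun h =>
        hβsup (by rw [← h]; exact hqsub w (hrsub w r.start_mem_support))
      have hwα : w ≠ α := fun h => (Gi i).irrefl (h ▸ hadj2)
      have hvN : v ∈ N := (hNmem v).mpr ⟨hvα, hvβ, hle i hadj⟩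
      have hwN : w ∈ N := (hNmem w).mpr ⟨hwα, hwβ, hle i hadj2⟩
      have hclsv : c s(α, v) = i := ((hc i α v).mp hadj).2
      have hclsw : c s(α, w) = i := ((hc i α w).mp hadj2).2
      by_cases hvw : v = w
      · exfalso
        have hr2 : (r.copy rfl hvw).IsPath := (SimpleGraph.Walk.isPath_copy r rfl hvw).mpr hr
        rw [SimpleGraph.Walk.isPath_iff_eq_nil] at hr2
        have hlen : r.length = 0 := by
          have h9 := congrArg SimpleGraph.Walk.length hr2
          rwa [SimpleGraph.Walk.length_copy, SimpleGraph.Walk.length_nil] at h9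
        have h3 := hcy0.three_le_length
        rw [hdec, SimpleGraph.Walk.length_cons] at h3
        have h4 : q.length = r.length + 1 := by
          have h9 := congrArg SimpleGraph.Walk.length hrev
          rwa [SimpleGraph.Walk.length_reverse, SimpleGraph.Walk.length_cons] at h9
        omega
      · refine Or.inr ⟨v, w, hvN, hwN, hvw, false, false, ?_, ?_, r.reverse, ?_⟩
        · rw [hvtx_f]; exact hclsv
        · rw [hvtx_f]; exact hclsw
        · intro x hx
          rw [SimpleGraph.Walk.support_reverse, List.mem_reverse] at hx
          refine ⟨fun h => hαr ?_, fun h => hβsup ?_⟩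
          · rw [← h]; exact hx
          · rw [← h]; exact hqsub x (hrsub x hx)
    · -- cycle through β
      obtain ⟨cyc, hcy0⟩ := hcyc
      have hαsup : α ∉ cyc.support := fun h => hreach (Reachable.symm ⟨cyc.takeUntil α h⟩)
      obtain ⟨v, hadj, q, hdec⟩ := walk_decomp' cyc hcy0.ne_nil
      have hcy := hcy0
      rw [hdec, SimpleGraph.Walk.cons_isCycle_iff] at hcy
      obtain ⟨hq, hedge⟩ := hcy
      have hvβ : v ≠ β := fun h => (Gi i).irrefl (h ▸ hadj)
      obtain ⟨w, hadj2, r, hrev⟩ := walk_decomp q.reverse (Ne.symm hvβ)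
      have hqp := hq.reverse
      rw [hrev, SimpleGraph.Walk.cons_isPath_iff] at hqp
      obtain ⟨hr, hβr⟩ := hqp
      have hrsub : ∀ x, x ∈ r.support → x ∈ q.support := by
        intro x hx
        have h1 : x ∈ q.reverse.support := by
          rw [hrev, SimpleGraph.Walk.support_cons]
          exact List.mem_cons_of_mem _ hx
        rwa [SimpleGraph.Walk.support_reverse, List.mem_reverse] at h1
      have hqsub : ∀ x, x ∈ q.support → x ∈ cyc.support := by
        intro x hx
        rw [hdec, SimpleGraph.Walk.support_cons]
        exact List.mem_cons_of_mem _ hx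
      have hvα : v ≠ α := fun h => hαsup (by rw [← h]; exact hqsub v q.start_mem_support)
      have hwα : w ≠ α := fun h =>
        hαsup (by rw [← h]; exact hqsub w (hrsub w r.start_mem_support))
      have hwβ : w ≠ β := fun h => (Gi i).irrefl (h ▸ hadj2)
      have hvN : v ∈ N := (hNmem v).mpr ⟨hvα, hvβ, (hswo v hvα hvβ).mpr (hle i hadj)⟩
      have hwN : w ∈ N := (hNmem w).mpr ⟨hwα, hwβ, (hswo w hwα hwβ).mpr (hle i hadj2)⟩
      have hclsv : c s(β, v) = i := ((hc i β v).mp hadj).2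
      have hclsw : c s(β, w) = i := ((hc i β w).mp hadj2).2
      by_cases hvw : v = w
      · exfalso
        have hr2 : (r.copy rfl hvw).IsPath := (SimpleGraph.Walk.isPath_copy r rfl hvw).mpr hr
        rw [SimpleGraph.Walk.isPath_iff_eq_nil] at hr2
        have hlen : r.length = 0 := by
          have h9 := congrArg SimpleGraph.Walk.length hr2
          rwa [SimpleGraph.Walk.length_copy, SimpleGraph.Walk.length_nil] at h9
        have h3 := hcy0.three_le_length
        rw [hdec, SimpleGraph.Walk.length_cons] at h3
        have h4 : q.length = r.length + 1 := by
          have h9 := congrArg SimpleGraph.Walk.length hrev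
          rwa [SimpleGraph.Walk.length_reverse, SimpleGraph.Walk.length_cons] at h9
        omega
      · refine Or.inr ⟨v, w, hvN, hwN, hvw, true, true, ?_, ?_, r.reverse, ?_⟩
        · rw [hvtx_t]; exact hclsv
        · rw [hvtx_t]; exact hclsw
        · intro x hx
          rw [SimpleGraph.Walk.support_reverse, List.mem_reverse] at hx
          refine ⟨fun h => hαsup ?_, fun h => hβr ?_⟩
          · rw [← h]; exact hqsub x (hrsub x hx)
          · rw [← h]; exact hx
  -- per-class matchings
  have hmu : ∀ i : Fin t, ∃ μi : V × Bool → V × Bool,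
      (∀ x, x ∉ Ei i → μi x = x) ∧ (∀ x ∈ Ei i, μi x ∈ Ei i) ∧
      (∀ x ∈ Ei i, μi (μi x) = x) ∧
      ((Ei i).filter (fun x => μi x = x)).card ≤ 1 ∧
      (((G.Adj α β ∧ c s(α, β) = i) ∨ (∃ v ∈ N, c s(α, v) = i ∧ c s(β, v) = i)) ∨
       (∃ v w : V, v ∈ N ∧ w ∈ N ∧ v ≠ w ∧ ∃ bv bw : Bool,
        vtx (v, bv) = i ∧ vtx (w, bw) = i ∧ μi (v, bv) = (w, bw) ∧
        (∃ p : (Gi i).Walk v w, ∀ x ∈ p.support, x ≠ α ∧ x ≠ β))) := by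
    intro i
    rcases hTR i with htriv | ⟨v, w, hvN, hwN, hvw, bv, bw, hbv, hbw, hwalk⟩
    · obtain ⟨μi, h1, h2, h3, h4⟩ := exists_pairing (Ei i)
      exact ⟨μi, h1, h2, h3, h4, Or.inl htriv⟩
    · have hvE : (v, bv) ∈ Ei i := (hEimem i _).mpr ⟨hvN, hbv⟩
      have hwE : (w, bw) ∈ Ei i := (hEimem i _).mpr ⟨hwN, hbw⟩
      have hne : (v, bv) ≠ (w, bw) := fun h => hvw (congrArg Prod.fst h)
      obtain ⟨μi, h1, h2, h3, h4, h5⟩ := exists_pairing_pair (Ei i) _ _ hvE hwE hne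
      exact ⟨μi, h1, h2, h3, h4, Or.inr ⟨v, w, hvN, hwN, hvw, bv, bw, hbv, hbw, h5, hwalk⟩⟩
  choose μfam hμout hμmaps hμinv hμfix hμdes using hmu
  -- glue into a global involution
  set μg : V × Bool → V × Bool := fun e => μfam (vtx e) e with hμgdef
  have hμgE : ∀ e ∈ SN, μg e ∈ Ei (vtx e) := by
    intro e he
    exact hμmaps (vtx e) e ((hEimem _ e).mpr ⟨(hSNmem e).mp he, rfl⟩)
  have hμgSN : ∀ e ∈ SN, μg e ∈ SN := by
    intro e he
    have := hμgE e he
    rw [hEimem] at this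
    exact (hSNmem _).mpr this.1
  have hμgvtx : ∀ e ∈ SN, vtx (μg e) = vtx e := by
    intro e he
    have := hμgE e he
    rw [hEimem] at this
    exact this.2
  have hμginv : ∀ e ∈ SN, μg (μg e) = e := by
    intro e he
    have h1 : μg (μg e) = μfam (vtx e) (μfam (vtx e) e) := by
      rw [hμgdef]
      simp only []
      rw [hμgvtx e he]
    rw [h1]
    exact hμinv (vtx e) e ((hEimem _ e).mpr ⟨(hSNmem e).mp he, rfl⟩)
  -- the colouring
  obtain ⟨f, hfτ, hfμ⟩ := exists_coloring SN (fun e => (e.1, !e.2)) μg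
    (by intro x hx; rw [hSNmem] at hx ⊢; exact hx)
    (by intro x hx; simp)
    (by intro x hx h; have := congrArg Prod.snd h; simp at this)
    hμgSN hμginv
  -- the orientation
  set σ : V → Bool := fun v => !(f (v, false)) with hσdef
  have hfflip : ∀ v ∈ N, f (v, true) = !(f (v, false)) := by
    intro v hv
    have := hfτ (v, false) ((hSNmem _).mpr hv)
    exact this
  have hftrue : ∀ v ∈ N, ∀ b : Bool, f (v, b) = true ↔ b = σ v := by
    intro v hv b
    have hflip := hfflip v hv
    cases b <;> cases hfb : f (v, false) <;> simp [hσdef, hflip, hfb]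
  set fA : V → Fin t := fun v => if σ v then c s(β, v) else c s(α, v) with hfAdef
  set fB : V → Fin t := fun v => if σ v then c s(α, v) else c s(β, v) with hfBdef
  have hfAvtx : ∀ v, fA v = vtx (v, σ v) := by
    intro v
    cases hσ : σ v
    · rw [hvtx_f]; simp [hfAdef, hσ]
    · rw [hvtx_t]; simp [hfAdef, hσ]
  have hfBvtx : ∀ v, fB v = vtx (v, !σ v) := by
    intro v
    cases hσ : σ v
    · rw [show (!false) = true from rfl, hvtx_t]; simp [hfBdef, hσ]
    · rw [show (!true) = false from rfl, hvtx_f]; simp [hfBdef, hσ]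
  -- the new classification
  set c' : V → V → Fin t := fun u v =>
    if u ≠ α ∧ u ≠ β ∧ v = α then fA u
    else if u ≠ α ∧ u ≠ β ∧ v = β then fB u
    else if v ≠ α ∧ v ≠ β ∧ u = α then fA v
    else if v ≠ α ∧ v ≠ β ∧ u = β then fB v
    else c s(u, v) with hc'def
  have hc'_oo : ∀ u v, u ≠ α → u ≠ β → v ≠ α → v ≠ β → c' u v = c s(u, v) := by
    intro u v h1 h2 h3 h4
    rw [hc'def]
    simp [h1, h2, h3, h4]
  have hc'_αo : ∀ v, v ≠ α → v ≠ β → c' α v = fA v := by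
    intro v h3 h4
    rw [hc'def]
    simp [h3, h4, hab]
  have hc'_oα : ∀ v, v ≠ α → v ≠ β → c' v α = fA v := by
    intro v h3 h4
    rw [hc'def]
    simp [h3, h4]
  have hc'_βo : ∀ v, v ≠ α → v ≠ β → c' β v = fB v := by
    intro v h3 h4
    rw [hc'def]
    simp [h3, h4, hβα]
  have hc'_oβ : ∀ v, v ≠ α → v ≠ β → c' v β = fB v := by
    intro v h3 h4
    rw [hc'def]
    simp [h3, h4, hab, hβα]
  have hc'_αβ : c' α β = c s(α, β) := by
    rw [hc'def]; simp [hab, hβα]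
  have hc'_βα : c' β α = c s(β, α) := by
    rw [hc'def]; simp [hab, hβα]
  have hc'symm : ∀ u v, c' u v = c' v u := by
    intro u v
    by_cases h1 : u = α
    · rw [h1]
      by_cases h3 : v = α
      · rw [h3]
      by_cases h4 : v = β
      · rw [h4, hc'_αβ, hc'_βα, Sym2.eq_swap]
      · rw [hc'_αo v h3 h4, hc'_oα v h3 h4]
    by_cases h2 : u = β
    · rw [h2]
      by_cases h3 : v = α
      · rw [h3, hc'_βα, hc'_αβ, Sym2.eq_swap]
      by_cases h4 : v = β
      · rw [h4]
      · rw [hc'_βo v h3 h4, hc'_oβ v h3 h4]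
    · by_cases h3 : v = α
      · rw [h3, hc'_oα u h1 h2, hc'_αo u h1 h2]
      by_cases h4 : v = β
      · rw [h4, hc'_oβ u h1 h2, hc'_βo u h1 h2]
      · rw [hc'_oo u v h1 h2 h3 h4, hc'_oo v u h3 h4 h1 h2, Sym2.eq_swap]
  -- the new factorisation
  set F : Fin t → SimpleGraph V := fun i =>
    { Adj := fun u v => G.Adj u v ∧ c' u v = i
      symm := by
        constructor; rintro u v ⟨h1, h2⟩
        exact ⟨h1.symm, by rw [← hc'symm u v]; exact h2⟩
      loopless := by constructor; rintro v ⟨h, _⟩; exact G.irrefl h } with hFdef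
  have hF : ∀ i u v, (F i).Adj u v ↔ (G.Adj u v ∧ c' u v = i) := by
    intro i u v; rw [hFdef]

  have hffalse : ∀ v ∈ N, ∀ b, (f (v, b) = false ↔ b = !σ v) := by
    intro v hv b
    have hflip := hfflip v hv
    cases b <;> cases hfb : f (v, false) <;> simp [hσdef, hflip, hfb]
  set rowc : SimpleGraph V → V → ℕ :=
    fun H v => (univ.filter (fun w => H.Adj v w)).card with hrowcdef
  have hnb : ∀ (H : SimpleGraph V) (v : V), (H.neighborSet v).ncard = rowc H v := by
    intro H v
    simp only [hrowcdef]
    rw [← Set.ncard_coe_finset]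
    congr 1
    ext w
    simp
  have hswo2 : ∀ v, v ≠ α → v ≠ β → (G.Adj v α ↔ G.Adj v β) := by
    intro v h1 h2
    rw [G.adj_comm v α, G.adj_comm v β]
    exact hswo v h1 h2
  have hcswap : ∀ u v : V, c s(u, v) = c s(v, u) := by
    intro u v
    rw [Sym2.eq_swap]
  have hFadj_αo : ∀ i w, w ≠ α → w ≠ β → ((F i).Adj α w ↔ (G.Adj α w ∧ fA w = i)) := by
    intro i w h1 h2
    rw [hF, hc'_αo w h1 h2]
  have hFadj_βo : ∀ i w, w ≠ α → w ≠ β → ((F i).Adj β w ↔ (G.Adj α w ∧ fB w = i)) := by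
    intro i w h1 h2
    rw [hF, hc'_βo w h1 h2]
    exact and_congr_left' (hswo w h1 h2).symm
  have hGadj_βo : ∀ i w, w ≠ α → w ≠ β → ((Gi i).Adj β w ↔ (G.Adj α w ∧ c s(β, w) = i)) := by
    intro i w h1 h2
    rw [hc i β w]
    exact and_congr_left' (hswo w h1 h2).symm
  have hrowgen : ∀ (H : SimpleGraph V) (g : V → Fin t) (i : Fin t) (γ γ' : V), γ' ≠ γ →
      (∀ w, (w = α ∨ w = β) ↔ (w = γ ∨ w = γ')) →
      (∀ w, w ≠ α → w ≠ β → (H.Adj γ w ↔ (G.Adj α w ∧ g w = i))) →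
      (H.Adj γ γ' ↔ (G.Adj α β ∧ c s(α, β) = i)) →
      rowc H γ
        = (N.filter (fun v => g v = i)).card
          + (if G.Adj α β ∧ c s(α, β) = i then 1 else 0) := by
    intro H g i γ γ' hne hset hadj hadj2
    simp only [hrowcdef]
    have hγ : γ = α ∨ γ = β := (hset γ).mpr (Or.inl rfl)
    have hγ' : γ' = α ∨ γ' = β := (hset γ').mpr (Or.inr rfl)
    have hsplit : univ.filter (fun w => H.Adj γ w)
        = (N.filter (fun v => g v = i))
          ∪ (if G.Adj α β ∧ c s(α, β) = i then {γ'} else ∅) := by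
      ext w
      simp only [mem_filter, mem_union, mem_univ, true_and, hNmem]
      by_cases hw1 : w = γ
      · rw [hw1]
        constructor
        · intro h; exact absurd h H.irrefl
        · rintro (⟨⟨hh1, hh2, _⟩, _⟩ | hmem)
          · rcases hγ with h | h
            · exact absurd h hh1
            · exact absurd h hh2
          · exfalso
            by_cases hcond : G.Adj α β ∧ c s(α, β) = i
            · rw [if_pos hcond] at hmem
              exact hne.symm (mem_singleton.mp hmem)
            · rw [if_neg hcond] at hmem
              exact notMem_empty _ hmem
      by_cases hw2 : w = γ'
      · rw [hw2, hadj2]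
        constructor
        · intro h
          right
          rw [if_pos h]
          exact mem_singleton_self _
        · rintro (⟨⟨hh1, hh2, _⟩, _⟩ | hmem)
          · exfalso
            rcases hγ' with h | h
            · exact hh1 h
            · exact hh2 h
          · by_cases hcond : G.Adj α β ∧ c s(α, β) = i
            · exact hcond
            · rw [if_neg hcond] at hmem
              exact absurd hmem (notMem_empty _)
      · have hw : w ≠ α ∧ w ≠ β := by
          have h3 : ¬(w = α ∨ w = β) := fun h => by
            rcases (hset w).mp h with h' | h'
            · exact hw1 h'
            · exact hw2 h'
          exact ⟨fun h => h3 (Or.inl h), fun h => h3 (Or.inr h)⟩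
        rw [hadj w hw.1 hw.2]
        constructor
        · rintro ⟨h1, h2⟩
          exact Or.inl ⟨⟨hw.1, hw.2, h1⟩, h2⟩
        · rintro (⟨⟨_, _, h1⟩, h2⟩ | hmem)
          · exact ⟨h1, h2⟩
          · exfalso
            by_cases hcond : G.Adj α β ∧ c s(α, β) = i
            · rw [if_pos hcond] at hmem
              exact hw2 (mem_singleton.mp hmem)
            · rw [if_neg hcond] at hmem
              exact notMem_empty _ hmem
    have hdisj : Disjoint (N.filter (fun v => g v = i))
        (if G.Adj α β ∧ c s(α, β) = i then ({γ'} : Finset V) else ∅) := by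
      split_ifs
      · rw [Finset.disjoint_singleton_right, mem_filter, hNmem]
        rintro ⟨⟨hh1, hh2, _⟩, _⟩
        rcases hγ' with h | h
        · exact hh1 h
        · exact hh2 h
      · exact Finset.disjoint_empty_right _
    rw [hsplit, card_union_of_disjoint hdisj]
    congr 1
    split_ifs <;> simp
  have hrowFα : ∀ i, rowc (F i) α
      = (N.filter (fun v => fA v = i)).card
        + (if G.Adj α β ∧ c s(α, β) = i then 1 else 0) := by
    intro i
    refine hrowgen (F i) fA i α β hβα (fun w => Iff.rfl) (hFadj_αo i) ?_
    rw [hF, hc'_αβ]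
  have hrowFβ : ∀ i, rowc (F i) β
      = (N.filter (fun v => fB v = i)).card
        + (if G.Adj α β ∧ c s(α, β) = i then 1 else 0) := by
    intro i
    refine hrowgen (F i) fB i β α hab (fun w => or_comm) (hFadj_βo i) ?_
    rw [hF]
    constructor
    · rintro ⟨h1, h2⟩
      rw [hc'_βα] at h2
      rw [hcswap β α] at h2
      exact ⟨h1.symm, h2⟩
    · rintro ⟨h1, h2⟩
      refine ⟨h1.symm, ?_⟩
      rw [hc'_βα, hcswap β α]
      exact h2
  have hrowGα : ∀ i, rowc (Gi i) α
      = (N.filter (fun v => c s(α, v) = i)).card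
        + (if G.Adj α β ∧ c s(α, β) = i then 1 else 0) := by
    intro i
    exact hrowgen (Gi i) (fun v => c s(α, v)) i α β hβα (fun w => Iff.rfl)
      (fun w _ _ => hc i α w) (hc i α β)
  have hrowGβ : ∀ i, rowc (Gi i) β
      = (N.filter (fun v => c s(β, v) = i)).card
        + (if G.Adj α β ∧ c s(α, β) = i then 1 else 0) := by
    intro i
    refine hrowgen (Gi i) (fun v => c s(β, v)) i β α hab (fun w => or_comm) (hGadj_βo i) ?_
    rw [hc i β α]
    constructor
    · rintro ⟨h1, h2⟩
      rw [hcswap β α] at h2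
      exact ⟨h1.symm, h2⟩
    · rintro ⟨h1, h2⟩
      refine ⟨h1.symm, ?_⟩
      rw [hcswap β α]
      exact h2
  have hrowo : ∀ i v, v ≠ α → v ≠ β → rowc (F i) v = rowc (Gi i) v := by
    intro i v h1 h2
    simp only [hrowcdef]
    cases hσv : σ v
    · have key0 : ∀ w, ((F i).Adj v w ↔ (Gi i).Adj v w) := by
        intro w
        by_cases hw1 : w = α
        · rw [hw1, hF, hc'_oα v h1 h2, hc i v α]
          have h5 : fA v = c s(α, v) := by simp [hfAdef, hσv]
          rw [h5, hcswap α v]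
        by_cases hw2 : w = β
        · rw [hw2, hF, hc'_oβ v h1 h2, hc i v β]
          have h5 : fB v = c s(β, v) := by simp [hfBdef, hσv]
          rw [h5, hcswap β v]
        · rw [hF, hc'_oo v w h1 h2 hw1 hw2, hc i v w]
      apply Finset.card_bij' (fun a _ => a) (fun a _ => a)
      · intro a ha
        simp only [Finset.mem_filter] at ha ⊢
        exact ⟨mem_univ _, (key0 a).mp ha.2⟩
      · intro a ha
        simp only [Finset.mem_filter] at ha ⊢
        exact ⟨mem_univ _, (key0 a).mpr ha.2⟩
      · intro a _
        rfl
      · intro a _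
        rfl
    · have key1 : ∀ a, (F i).Adj v a → (Gi i).Adj v (Equiv.swap α β a) := by
        intro a ha
        by_cases ha1 : a = α
        · rw [ha1, Equiv.swap_apply_left]
          rw [ha1, hF, hc'_oα v h1 h2] at ha
          have h5 : fA v = c s(β, v) := by simp [hfAdef, hσv]
          rw [h5] at ha
          exact (hc i v β).mpr ⟨(hswo2 v h1 h2).mp ha.1, by rw [← hcswap β v]; exact ha.2⟩
        by_cases ha2 : a = β
        · rw [ha2, Equiv.swap_apply_right]
          rw [ha2, hF, hc'_oβ v h1 h2] at ha
          have h5 : fB v = c s(α, v) := by simp [hfBdef, hσv]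
          rw [h5] at ha
          exact (hc i v α).mpr ⟨(hswo2 v h1 h2).mpr ha.1, by rw [← hcswap α v]; exact ha.2⟩
        · rw [Equiv.swap_apply_of_ne_of_ne ha1 ha2]
          rw [hF, hc'_oo v a h1 h2 ha1 ha2] at ha
          exact (hc i v a).mpr ha
      have key2 : ∀ a, (Gi i).Adj v a → (F i).Adj v (Equiv.swap α β a) := by
        intro a ha
        rw [hc i v a] at ha
        by_cases ha1 : a = α
        · rw [ha1, Equiv.swap_apply_left, hF, hc'_oβ v h1 h2]
          have h5 : fB v = c s(α, v) := by simp [hfBdef, hσv]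
          rw [h5]
          rw [ha1] at ha
          exact ⟨(hswo2 v h1 h2).mp ha.1, by rw [hcswap α v]; exact ha.2⟩
        by_cases ha2 : a = β
        · rw [ha2, Equiv.swap_apply_right, hF, hc'_oα v h1 h2]
          have h5 : fA v = c s(β, v) := by simp [hfAdef, hσv]
          rw [h5]
          rw [ha2] at ha
          exact ⟨(hswo2 v h1 h2).mpr ha.1, by rw [hcswap β v]; exact ha.2⟩
        · rw [Equiv.swap_apply_of_ne_of_ne ha1 ha2, hF, hc'_oo v a h1 h2 ha1 ha2]
          exact ha
      apply Finset.card_bij' (fun a _ => Equiv.swap α β a) (fun a _ => Equiv.swap α β a)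
      · intro a ha
        simp only [Finset.mem_filter] at ha ⊢
        exact ⟨mem_univ _, key1 a ha.2⟩
      · intro a ha
        simp only [Finset.mem_filter] at ha ⊢
        exact ⟨mem_univ _, key2 a ha.2⟩
      · intro a _
        exact Equiv.swap_apply_self α β a
      · intro a _
        exact Equiv.swap_apply_self α β a
  have haT : ∀ i, (N.filter (fun v => fA v = i)).card
      = ((Ei i).filter (fun e => f e = true)).card := by
    intro i
    apply Finset.card_bij (fun v _ => (v, σ v))
    · intro a ha
      rw [mem_filter] at ha ⊢
      refine ⟨(hEimem i _).mpr ⟨ha.1, ?_⟩, (hftrue a ha.1 _).mpr rfl⟩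
      rw [← hfAvtx]
      exact ha.2
    · intro a1 h1' a2 h2' heq
      exact congrArg Prod.fst heq
    · intro e he
      rw [mem_filter] at he
      obtain ⟨heE, hef⟩ := he
      have h8 := (hEimem i e).mp heE
      have h9 : e.2 = σ e.1 := (hftrue e.1 h8.1 e.2).mp hef
      refine ⟨e.1, ?_, ?_⟩
      · rw [mem_filter]
        refine ⟨h8.1, ?_⟩
        rw [hfAvtx, ← h9]
        exact h8.2
      · rw [← h9]
  have hbT : ∀ i, (N.filter (fun v => fB v = i)).card
      = ((Ei i).filter (fun e => f e = false)).card := by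
    intro i
    apply Finset.card_bij (fun v _ => (v, !σ v))
    · intro a ha
      rw [mem_filter] at ha ⊢
      refine ⟨(hEimem i _).mpr ⟨ha.1, ?_⟩, (hffalse a ha.1 _).mpr rfl⟩
      rw [← hfBvtx]
      exact ha.2
    · intro a1 h1' a2 h2' heq
      exact congrArg Prod.fst heq
    · intro e he
      rw [mem_filter] at he
      obtain ⟨heE, hef⟩ := he
      have h8 := (hEimem i e).mp heE
      have h9 : e.2 = !σ e.1 := (hffalse e.1 h8.1 e.2).mp hef
      refine ⟨e.1, ?_, ?_⟩
      · rw [mem_filter]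
        refine ⟨h8.1, ?_⟩
        rw [hfBvtx, ← h9]
        exact h8.2
      · rw [← h9]
  have hEbal : ∀ i, |(((Ei i).filter (fun e => f e = true)).card : ℤ)
      - (((Ei i).filter (fun e => f e = false)).card : ℤ)| ≤ 1 := by
    intro i
    apply balance_count (Ei i) μg f
    · intro x hx
      have h8 := (hEimem i x).mp hx
      have hx' : x ∈ SN := (hSNmem x).mpr h8.1
      have h9 := hμgE x hx'
      rwa [h8.2] at h9
    · intro x hx
      exact hμginv x ((hSNmem x).mpr ((hEimem i x).mp hx).1)
    · intro x hx
      exact hfμ x ((hSNmem x).mpr ((hEimem i x).mp hx).1)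
    · have h7 : (Ei i).filter (fun x => μg x = x) = (Ei i).filter (fun x => μfam i x = x) := by
        apply filter_congr
        intro x hx
        have h8 := (hEimem i x).mp hx
        have h9 : μg x = μfam i x := by
          rw [hμgdef]
          simp only
          rw [h8.2]
        rw [h9]
      rw [h7]
      exact hμfix i
  refine ⟨F, ?_, ?_, ?_, ?_, ?_, ?_, ?_⟩
  · -- ≤ G
    intro i u v h
    exact ((hF i u v).mp h).1
  · -- partition
    have key : ∀ u v : V, s(u, v) ∈ G.edgeSet → ∃! i, s(u, v) ∈ (F i).edgeSet := by
      intro u v he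
      rw [SimpleGraph.mem_edgeSet] at he
      refine ⟨c' u v, ?_, ?_⟩
      · simp only [SimpleGraph.mem_edgeSet, hF]; exact ⟨he, trivial⟩
      · intro j hj
        simp only [SimpleGraph.mem_edgeSet, hF] at hj
        exact hj.2.symm
    intro e
    induction e using Sym2.ind with
    | _ u v => exact key u v
  · -- (1) edge count
    intro i
    have hsum : ∑ v, rowc (F i) v = ∑ v, rowc (Gi i) v := by
      rw [← Finset.sum_filter_add_sum_filter_not univ (fun v => v = α ∨ v = β)
        (fun v => rowc (F i) v),
        ← Finset.sum_filter_add_sum_filter_not univ (fun v => v = α ∨ v = β)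
        (fun v => rowc (Gi i) v)]
      have hpairset : univ.filter (fun v => v = α ∨ v = β) = {α, β} := by
        ext x; simp
      congr 1
      · rw [hpairset, Finset.sum_pair hab, Finset.sum_pair hab,
          hrowFα i, hrowFβ i, hrowGα i, hrowGβ i]
        have hABsum : (N.filter (fun v => fA v = i)).card
            + (N.filter (fun v => fB v = i)).card
            = (N.filter (fun v => c s(α, v) = i)).card
              + (N.filter (fun v => c s(β, v) = i)).card := by
          rw [Finset.card_filter, Finset.card_filter, Finset.card_filter, Finset.card_filter,
            ← Finset.sum_add_distrib, ← Finset.sum_add_distrib]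
          apply Finset.sum_congr rfl
          intro v _
          cases hσv : σ v
          · have e1 : fA v = c s(α, v) := by simp [hfAdef, hσv]
            have e2 : fB v = c s(β, v) := by simp [hfBdef, hσv]
            rw [e1, e2]
          · have e1 : fA v = c s(β, v) := by simp [hfAdef, hσv]
            have e2 : fB v = c s(α, v) := by simp [hfBdef, hσv]
            rw [e1, e2, add_comm]
        omega
      · apply Finset.sum_congr rfl
        intro v hv
        rw [mem_filter] at hv
        push_neg at hv
        exact hrowo i v hv.2.1 hv.2.2
    haveI : DecidableRel (F i).Adj := Classical.decRel _
    haveI : DecidableRel (Gi i).Adj := Classical.decRel _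
    have hdeg : ∀ (H : SimpleGraph V) (inst : DecidableRel H.Adj) (v : V),
        H.degree v = rowc H v := by
      intro H inst v
      simp only [hrowcdef]
      show (H.neighborFinset v).card = _
      congr 1
      ext w
      simp [SimpleGraph.mem_neighborFinset]
    have hedges : 2 * (F i).edgeFinset.card = 2 * (Gi i).edgeFinset.card := by
      rw [← SimpleGraph.sum_degrees_eq_twice_card_edges,
        ← SimpleGraph.sum_degrees_eq_twice_card_edges]
      calc ∑ v, (F i).degree v
          = ∑ v, rowc (F i) v := Finset.sum_congr rfl (fun v _ => hdeg (F i) _ v)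
        _ = ∑ v, rowc (Gi i) v := hsum
        _ = ∑ v, (Gi i).degree v :=
            (Finset.sum_congr rfl (fun v _ => (hdeg (Gi i) _ v).symm))
    have hcard : (F i).edgeFinset.card = (Gi i).edgeFinset.card := by omega
    rw [← SimpleGraph.coe_edgeFinset (F i), ← SimpleGraph.coe_edgeFinset (Gi i),
      Set.ncard_coe_finset, Set.ncard_coe_finset, hcard]
  · -- (2) degrees
    intro i v h1 h2
    rw [hnb (F i) v, hnb (Gi i) v]
    exact hrowo i v h1 h2
  · -- (3) equal edges off {α, β}
    intro i u v h1 h2 h3 h4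
    rw [hF, hc'_oo u v h1 h2 h3 h4, ← hc i u v]
  · -- (4) balance
    intro i
    rw [hnb (F i) α, hnb (F i) β, hrowFα i, hrowFβ i, haT i, hbT i]
    have hbal := hEbal i
    rw [abs_le] at hbal ⊢
    push_cast
    omega
  · -- (5) connectivity
    intro i
    rcases hμdes i with (⟨hadj, hcls⟩ | ⟨v, hvN, hcls1, hcls2⟩) |
      ⟨v, w, hvN, hwN, hvw, bv, bw, hbv, hbw, hpair, p, hp⟩
    · exact SimpleGraph.Adj.reachable
        ((hF i α β).mpr ⟨hadj, by rw [hc'_αβ]; exact hcls⟩)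
    · have hvmem := (hNmem v).mp hvN
      have hAv : fA v = i := by cases hσv : σ v <;> simp [hfAdef, hσv, hcls1, hcls2]
      have hBv : fB v = i := by cases hσv : σ v <;> simp [hfBdef, hσv, hcls1, hcls2]
      have e1 : (F i).Adj α v := (hF i α v).mpr
        ⟨hvmem.2.2, by rw [hc'_αo v hvmem.1 hvmem.2.1]; exact hAv⟩
      have e2 : (F i).Adj β v := (hF i β v).mpr
        ⟨hNβ v hvN, by rw [hc'_βo v hvmem.1 hvmem.2.1]; exact hBv⟩
      exact e1.reachable.trans e2.reachable.symm
    · have hvm := (hNmem v).mp hvN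
      have hwm := (hNmem w).mp hwN
      have hSNv : (v, bv) ∈ SN := (hSNmem _).mpr hvN
      have hμgv : μg (v, bv) = (w, bw) := by
        rw [hμgdef]
        simp only
        rw [hbv]
        exact hpair
      have hflipd : f (w, bw) = !f (v, bv) := by
        have h9 := hfμ (v, bv) hSNv
          (by rw [hμgv]; exact fun hh => hvw (congrArg Prod.fst hh).symm)
        rwa [hμgv] at h9
      have hpe : ∀ e ∈ p.edges, e ∈ (F i).edgeSet := by
        intro e he
        have heG : e ∈ (Gi i).edgeSet := p.edges_subset_edgeSet he
        revert he heG
        refine Sym2.inductionOn e ?_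
        intro x y he heG
        have hx := hp x (p.fst_mem_support_of_mem_edges he)
        have hy := hp y (p.snd_mem_support_of_mem_edges he)
        rw [SimpleGraph.mem_edgeSet] at heG ⊢
        exact (hF i x y).mpr ⟨hle i heG,
          by rw [hc'_oo x y hx.1 hx.2 hy.1 hy.2]; exact ((hc i x y).mp heG).2⟩
      have hreachvw : (F i).Reachable v w := ⟨p.transfer (F i) hpe⟩
      have hvA : f (v, bv) = true → (F i).Adj α v := by
        intro hfv
        have h9 : bv = σ v := (hftrue v hvN bv).mp hfv
        have h10 : fA v = i := by rw [hfAvtx, ← h9, hbv]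
        exact (hF i α v).mpr ⟨hvm.2.2, by rw [hc'_αo v hvm.1 hvm.2.1]; exact h10⟩
      have hvB : f (v, bv) = false → (F i).Adj β v := by
        intro hfv
        have h9 : bv = !σ v := (hffalse v hvN bv).mp hfv
        have h10 : fB v = i := by rw [hfBvtx, ← h9, hbv]
        exact (hF i β v).mpr ⟨hNβ v hvN, by rw [hc'_βo v hvm.1 hvm.2.1]; exact h10⟩
      have hwA : f (w, bw) = true → (F i).Adj α w := by
        intro hfw
        have h9 : bw = σ w := (hftrue w hwN bw).mp hfw
        have h10 : fA w = i := by rw [hfAvtx, ← h9, hbw]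
        exact (hF i α w).mpr ⟨hwm.2.2, by rw [hc'_αo w hwm.1 hwm.2.1]; exact h10⟩
      have hwB : f (w, bw) = false → (F i).Adj β w := by
        intro hfw
        have h9 : bw = !σ w := (hffalse w hwN bw).mp hfw
        have h10 : fB w = i := by rw [hfBvtx, ← h9, hbw]
        exact (hF i β w).mpr ⟨hNβ w hwN, by rw [hc'_βo w hwm.1 hwm.2.1]; exact h10⟩
      cases hfv : f (v, bv)
      · have e1 : (F i).Adj β v := hvB hfv
        have e2 : (F i).Adj α w := hwA (by rw [hflipd, hfv]; rfl)
        exact (e2.reachable.trans hreachvw.symm).trans e1.reachable.symm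
      · have e1 : (F i).Adj α v := hvA hfv
        have e2 : (F i).Adj β w := hwB (by rw [hflipd, hfv]; rfl)
        exact (e1.reachable.trans hreachvw).trans e2.reachable.symm
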